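/- Let S be a semigroup and z₀ ∈ Z(S) a fixed element. The pairs f, g : S → ℂ with g ≠ 0 satisfying f(x y z₀) + f(y x z₀) = 2 f(x) g(y) for all x, y ∈ S are exactly the following: (1) f = 0 and g ≠ 0 arbitrary; (2) f = λ₂ χ and g = χ(z₀) χ, where χ : S → ℂ is a nonzero multiplicative function, λ₂ ∈ ℂ \ {0}, and χ(z₀) ≠ 0. -/

import Mathlib

/-- Description of the solutions `(f, g)` with `g ≠ 0` of
`f(x y z₀) + f(y x z₀) = 2 f(x) g(y)` on a semigroup, `z₀` central. -/
theorem symmetrized_kannappan_solutions {S : Type*} [Semigroup S]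
    (z₀ : S) (hz₀ : ∀ x : S, x * z₀ = z₀ * x)
    (f g : S → ℂ) (hg : g ≠ 0) :
    (∀ x y : S, f (x * y * z₀) + f (y * x * z₀) = 2 * f x * g y) ↔
      (f = 0) ∨
      (∃ (χ : S → ℂ) (lam₂ : ℂ),
        (∀ x y : S, χ (x * y) = χ x * χ y) ∧ χ ≠ 0 ∧ lam₂ ≠ 0 ∧ χ z₀ ≠ 0 ∧
        (∀ x : S, f x = lam₂ * χ x) ∧
        (∀ x : S, g x = χ z₀ * χ x)) := by
  constructor
  · intro heq
    by_cases hf : f = 0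
    · exact Or.inl hf
    right
    obtain ⟨a, ha⟩ := Function.ne_iff.mp hf
    simp only [Pi.zero_apply] at ha
    have hsymm : ∀ x y : S, f x * g y = f y * g x := by
      intro x y
      have h1 := heq x y
      have h2 := heq y x
      linear_combination (h2 - h1) / 2
    set c : ℂ := g a / f a with hc
    have hgf : ∀ x, g x = c * f x := by
      intro x
      have h1 := hsymm a x
      rw [hc]
      field_simp
      linear_combination h1
    have hc0 : c ≠ 0 := by
      intro h0
      apply hg
      funext x
      simp [hgf x, h0]
    set h : S → ℂ := fun x => c * f x with hh
    have hxval : ∀ x, h x = c * f x := fun x => rfl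
    have heq' : ∀ x y : S, h (x * y * z₀) + h (y * x * z₀) = 2 * h x * h y := by
      intro x y
      have h1 := heq x y
      have hgy := hgf y
      simp only [hxval]
      linear_combination c * h1 + 2 * c * f x * hgy
    have hha : h a ≠ 0 := mul_ne_zero hc0 ha
    have hA : ∀ x, h (x * z₀ * z₀) = h x * h z₀ := by
      intro x
      have h1 := heq' x z₀
      rw [show z₀ * x * z₀ = x * z₀ * z₀ by rw [hz₀ x]] at h1
      linear_combination h1 / 2
    have key : ∀ x y : S, h (x * y) * h z₀ + h (y * x) * h z₀ = 2 * h x * h (y * z₀) := by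
      intro x y
      have h1 := heq' x (y * z₀)
      rw [show x * (y * z₀) * z₀ = (x * y) * z₀ * z₀ by rw [mul_assoc x y z₀],
          show (y * z₀) * x * z₀ = (y * x) * z₀ * z₀ by
            rw [mul_assoc y z₀ x, ← hz₀ x, ← mul_assoc]] at h1
      rw [hA, hA] at h1
      exact h1
    have hC : ∀ x y, h x * h (y * z₀) = h y * h (x * z₀) := by
      intro x y
      have h1 := key x y
      have h2 := key y x
      linear_combination (h2 - h1) / 2
    set k : ℂ := h (a * z₀) / h a with hkdef
    have hk : ∀ x, h (x * z₀) = k * h x := by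
      intro x
      have h1 := hC x a
      rw [hkdef]
      field_simp
      linear_combination -h1
    have pair : ∀ u v : S, k * (h (u * v) + h (v * u)) = 2 * h u * h v := by
      intro u v
      have h1 := heq' u v
      rw [hk (u * v), hk (v * u)] at h1
      linear_combination h1
    have hk0 : k ≠ 0 := by
      intro h0
      have h1 := pair a a
      rw [h0] at h1
      have h2 : h a * h a = 0 := by linear_combination -h1 / 2
      exact hha (mul_self_eq_zero.mp h2)
    have hE : ∀ x y z : S, k * h (x * (y * z)) =
        h x * h (y * z) + h (x * y) * h z - h y * h (z * x) := by
      intro x y z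
      have p1 := pair x (y * z)
      have p2 := pair (x * y) z
      have p3 := pair y (z * x)
      simp only [mul_assoc] at p1 p2 p3 ⊢
      linear_combination (p1 + p2 - p3) / 2
    have hG : ∀ w x y : S,
        (k * h (y * w) - h y * h w) * (k * h (w * x) - h w * h x) = 0 := by
      intro w x y
      have e1 := hE x y (w * w)
      have e2 := hE x (y * w) w
      have e3 := hE w w x
      have e4 := hE x y w
      have e5 := pair w w
      have e6 := pair x w
      simp only [mul_assoc] at e1 e2 e3 e4 e5 e6 ⊢
      linear_combination (-k ^ 2) * e1 + k ^ 2 * e2 + (k * h y) * e3 + (k * h w) * e4 +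
        ((h x * h y - k * h (x * y)) / 2) * e5 + (-(h y * h w)) * e6
    have hD : ∀ u v : S, k * h (u * v) = h u * h v := by
      intro u v
      have h1 := hG u v v
      have h2 := pair v u
      have h3 : (k * h (u * v) - h u * h v) ^ 2 = 0 := by
        linear_combination -h1 + (k * h (u * v) - h u * h v) * h2
      have h4 := pow_eq_zero_iff (n := 2) (by norm_num) |>.mp h3
      linear_combination h4
    have hz2 : h z₀ = k ^ 2 := by
      have h1 := hD a z₀
      rw [hk a] at h1
      have h2 : h a * k ^ 2 = h a * h z₀ := by linear_combination h1
      exact (mul_left_cancel₀ hha h2).symm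
    refine ⟨fun x => h x / k, k / c, ?_, ?_, ?_, ?_, ?_, ?_⟩
    · intro x y
      have h1 := hD x y
      show h (x * y) / k = h x / k * (h y / k)
      rw [div_mul_div_comm, ← h1, mul_div_mul_left _ _ hk0]
    · intro h0
      have h1 := congrFun h0 a
      simp only [Pi.zero_apply] at h1
      exact hha ((div_eq_zero_iff.mp h1).resolve_right hk0)
    · exact div_ne_zero hk0 hc0
    · exact div_ne_zero (hz2 ▸ pow_ne_zero 2 hk0) hk0
    · intro x
      show f x = k / c * (h x / k)
      rw [hxval x]
      field_simp
    · intro x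
      show g x = h z₀ / k * (h x / k)
      have e : h z₀ / k * (h x / k) = h x := by
        rw [hz2]
        field_simp
      rw [e]
      exact hgf x
  · rintro (hf | ⟨χ, lam₂, hχ, hχ0, hlam, hχz, hfχ, hgχ⟩)
    · intro x y
      simp [hf]
    · intro x y
      rw [hfχ, hfχ, hfχ, hgχ, hχ, hχ, hχ, hχ]
      ring
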